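/- arXiv:1705.08333 — 6 statements merged into one kernel-verified Lean document; each statement's English description precedes it below -/
import Mathlib

section
/- Let (Ω, F, P) be a probability space and let (X_n)_{n≥1} be a sequence of integrable real-valued random variables on it. If (X_n) is W-uniformly integrable (W-UI), i.e. lim_{a→∞} sup_{n≥1} E[(|X_n|−a)·1_{{|X_n|≥a}}] = 0, then (X_n) is W*-uniformly integrable (W*-UI), i.e. lim_{m→∞} sup_{k≥1} Σ_{n=m}^{∞} P(|X_k| > n) = 0 (the sum being over integers n ≥ m). -/
open MeasureTheory Filter Topology
open scoped ENNReal

/-- W-UI ⇒ W*-UI in a probability space, for integrable random variables.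
W-UI: lim_{a→∞} sup_n E[(|X_n|−a)·1_{|X_n|≥a}] = 0;
W*-UI: lim_{m→∞} sup_k Σ_{n=m}^∞ P(|X_k| > n) = 0 (sum over integers n ≥ m,
rendered by the index shift n = m + j). -/
theorem wui_implies_wstarui {Ω : Type*} [MeasurableSpace Ω] (P : Measure Ω)
    [IsProbabilityMeasure P] (X : ℕ → Ω → ℝ) (hX : ∀ n, Measurable (X n))
    (hint : ∀ n, Integrable (X n) P)
    (hWUI : ∀ ε : ℝ, 0 < ε → ∃ a₀ : ℝ, ∀ a ≥ a₀, ∀ n : ℕ,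
      ∫ ω in {ω | a ≤ |X n ω|}, (|X n ω| - a) ∂P < ε) :
    Tendsto (fun m : ℕ => ⨆ k : ℕ, ∑' j : ℕ, P {ω | ((m + j : ℕ) : ℝ) < |X k ω|})
      atTop (𝓝 0) := by
  rw [ENNReal.tendsto_atTop_zero]
  intro ε hε
  obtain ⟨δ, hδpos, hδε⟩ : ∃ δ : ℝ, 0 < δ ∧ ENNReal.ofReal δ ≤ ε := by
    rcases eq_or_ne ε ⊤ with h | h
    · exact ⟨1, one_pos, h ▸ le_top⟩
    · exact ⟨ε.toReal, ENNReal.toReal_pos hε.ne' h, ENNReal.ofReal_toReal_le⟩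
  obtain ⟨a₀, ha₀⟩ := hWUI δ hδpos
  refine ⟨max 1 ⌈a₀ + 1⌉₊, fun m hm => ?_⟩
  have hm1 : 1 ≤ m := le_trans (le_max_left _ _) hm
  have hma : a₀ ≤ (m : ℝ) - 1 := by
    have h1 : ((⌈a₀ + 1⌉₊ : ℕ) : ℝ) ≤ (m : ℝ) :=
      Nat.cast_le.mpr (le_trans (le_max_right _ _) hm)
    have h2 : a₀ + 1 ≤ (⌈a₀ + 1⌉₊ : ℝ) := Nat.le_ceil _
    linarith
  have hm1R : (1 : ℝ) ≤ (m : ℝ) := by exact_mod_cast hm1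
  set a : ℝ := (m : ℝ) - 1 with ha
  refine iSup_le fun k => ?_
  set x : Ω → ℝ := fun ω => |X k ω| with hxdef
  have hxm : Measurable x := (hX k).abs
  set s : Set Ω := {ω | a ≤ x ω} with hsdef
  have hs : MeasurableSet s := measurableSet_le measurable_const hxm
  set h : Ω → ℝ := s.indicator (fun ω => x ω - a) with hhdef
  have hh_int : Integrable h P := ((hint k).abs.sub (integrable_const a)).indicator hs
  have hh_nonneg : 0 ≤ h := fun ω =>
    Set.indicator_nonneg (fun ω hω => sub_nonneg.mpr hω) ω
  -- key pointwise bound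
  have key : ∀ ω, (∑' j : ℕ, Set.indicator {ω | ((m + j : ℕ) : ℝ) < x ω}
      (fun _ => (1 : ℝ≥0∞)) ω) ≤ ENNReal.ofReal (h ω) := by
    intro ω
    set N : ℕ := ⌈x ω - m⌉₊ with hN
    have hzero : ∀ j ∉ Finset.range N,
        Set.indicator {ω | ((m + j : ℕ) : ℝ) < x ω} (fun _ => (1 : ℝ≥0∞)) ω = 0 := by
      intro j hj
      rw [Finset.mem_range, not_lt] at hj
      apply Set.indicator_of_notMem
      simp only [Set.mem_setOf_eq, not_lt]
      have h1 : x ω - m ≤ (N : ℝ) := Nat.le_ceil _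
      have h2 : (N : ℝ) ≤ (j : ℝ) := Nat.cast_le.mpr hj
      push_cast
      linarith
    have hsum : (∑' j : ℕ, Set.indicator {ω | ((m + j : ℕ) : ℝ) < x ω}
        (fun _ => (1 : ℝ≥0∞)) ω) ≤ (N : ℝ≥0∞) := by
      rw [tsum_eq_sum hzero]
      calc ∑ j ∈ Finset.range N, Set.indicator {ω | ((m + j : ℕ) : ℝ) < x ω}
            (fun _ => (1 : ℝ≥0∞)) ω
          ≤ ∑ _j ∈ Finset.range N, (1 : ℝ≥0∞) :=
            Finset.sum_le_sum fun j _ =>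
              Set.indicator_apply_le' (fun _ => le_refl _) (fun _ => zero_le)
        _ = (N : ℝ≥0∞) := by simp
    refine hsum.trans ?_
    rcases Nat.eq_zero_or_pos N with hN0 | hN0
    · simp [hN0]
    · have hxgt : (0 : ℝ) < x ω - m := Nat.ceil_pos.mp hN0
      have hmem : ω ∈ s := by
        simp only [hsdef, Set.mem_setOf_eq]
        linarith
      have hNle : (N : ℝ) ≤ x ω - a := by
        have := Nat.ceil_lt_add_one (le_of_lt hxgt)
        simp only [ha]
        linarith
      rw [hhdef, Set.indicator_of_mem hmem]
      calc (N : ℝ≥0∞) = ENNReal.ofReal (N : ℝ) := by simp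
        _ ≤ ENNReal.ofReal (x ω - a) := ENNReal.ofReal_le_ofReal hNle
  have meas : ∀ j : ℕ, MeasurableSet {ω | ((m + j : ℕ) : ℝ) < x ω} :=
    fun j => measurableSet_lt measurable_const hxm
  have step1 : (∑' j : ℕ, P {ω | ((m + j : ℕ) : ℝ) < x ω})
      ≤ ∫⁻ ω, ENNReal.ofReal (h ω) ∂P := by
    calc (∑' j : ℕ, P {ω | ((m + j : ℕ) : ℝ) < x ω})
        = ∑' j : ℕ, ∫⁻ ω, Set.indicator {ω | ((m + j : ℕ) : ℝ) < x ω}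
            (fun _ => (1 : ℝ≥0∞)) ω ∂P := by
          refine tsum_congr fun j => ?_
          exact (lintegral_indicator_one (meas j)).symm
      _ = ∫⁻ ω, ∑' j : ℕ, Set.indicator {ω | ((m + j : ℕ) : ℝ) < x ω}
            (fun _ => (1 : ℝ≥0∞)) ω ∂P := by
          refine (lintegral_tsum fun j => ?_).symm
          exact ((measurable_const.indicator (meas j)).aemeasurable)
      _ ≤ ∫⁻ ω, ENNReal.ofReal (h ω) ∂P := lintegral_mono key
  have step2 : (∫⁻ ω, ENNReal.ofReal (h ω) ∂P) = ENNReal.ofReal (∫ ω, h ω ∂P) :=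
    (ofReal_integral_eq_lintegral_ofReal hh_int (Filter.Eventually.of_forall hh_nonneg)).symm
  have step3 : (∫ ω, h ω ∂P) = ∫ ω in s, (x ω - a) ∂P := by
    rw [hhdef, integral_indicator hs]
  have hlt : (∫ ω in s, (x ω - a) ∂P) < δ := ha₀ a hma k
  calc (∑' j : ℕ, P {ω | ((m + j : ℕ) : ℝ) < x ω})
      ≤ ∫⁻ ω, ENNReal.ofReal (h ω) ∂P := step1
    _ = ENNReal.ofReal (∫ ω in s, (x ω - a) ∂P) := by rw [step2, step3]
    _ ≤ ENNReal.ofReal δ := ENNReal.ofReal_le_ofReal hlt.le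
    _ ≤ ε := hδε
end

section
/- Let (Ω, F, P) be a probability space and let (X_n)_{n≥1} be a sequence of integrable real-valued random variables on it. If (X_n) is W*-uniformly integrable (W*-UI), i.e. lim_{m→∞} sup_{k≥1} Σ_{n=m}^{∞} P(|X_k| > n) = 0, then (X_n) is W-uniformly integrable (W-UI), i.e. lim_{a→∞} sup_{n≥1} E[(|X_n|−a)·1_{{|X_n|≥a}}] = 0. -/
open MeasureTheory Filter Topology
open scoped ENNReal

/-- W*-UI ⇒ W-UI in a probability space, for integrable random variables.
W*-UI: lim_{m→∞} sup_k Σ_{n=m}^∞ P(|X_k| > n) = 0 (sum over integers n ≥ m,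
rendered by the index shift n = m + j);
W-UI: lim_{a→∞} sup_n E[(|X_n|−a)·1_{|X_n|≥a}] = 0. -/
theorem wstarui_implies_wui {Ω : Type*} [MeasurableSpace Ω] (P : Measure Ω)
    [IsProbabilityMeasure P] (X : ℕ → Ω → ℝ) (hX : ∀ n, Measurable (X n))
    (hint : ∀ n, Integrable (X n) P)
    (hWstar : Tendsto (fun m : ℕ => ⨆ k : ℕ, ∑' j : ℕ,
      P {ω | ((m + j : ℕ) : ℝ) < |X k ω|}) atTop (𝓝 0)) :
    ∀ ε : ℝ, 0 < ε → ∃ a₀ : ℝ, ∀ a ≥ a₀, ∀ n : ℕ,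
      ∫ ω in {ω | a ≤ |X n ω|}, (|X n ω| - a) ∂P < ε := by
  intro ε hε
  have hε' : (0 : ℝ≥0∞) < ENNReal.ofReal ε := by simpa using hε
  obtain ⟨m, hm⟩ := (hWstar.eventually_lt_const hε').exists
  refine ⟨(m : ℝ) + 1, ?_⟩
  intro a ha n
  set S : Set Ω := {ω | a ≤ |X n ω|} with hS
  have hSmeas : MeasurableSet S := measurableSet_le measurable_const (hX n).abs
  have hsetmeas : ∀ j : ℕ, MeasurableSet {ω | ((m + j : ℕ) : ℝ) < |X n ω|} :=
    fun j => measurableSet_lt measurable_const (hX n).abs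
  -- key pointwise bound
  have key : ∀ ω, S.indicator (fun ω => ENNReal.ofReal (|X n ω| - a)) ω ≤
      ∑' j : ℕ, Set.indicator {ω' | ((m + j : ℕ) : ℝ) < |X n ω'|} (fun _ => (1 : ℝ≥0∞)) ω := by
    intro ω
    by_cases hω : ω ∈ S
    · rw [Set.indicator_of_mem hω]
      have hωa : a ≤ |X n ω| := hω
      set N : ℕ := ⌊|X n ω| - m⌋₊ with hN
      have hc0 : (0 : ℝ) ≤ |X n ω| - m := by linarith
      have h1 : ENNReal.ofReal (|X n ω| - a) ≤ (N : ℝ≥0∞) := by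
        have hfl : |X n ω| - m - 1 < (N : ℝ) := Nat.sub_one_lt_floor _
        calc ENNReal.ofReal (|X n ω| - a) ≤ ENNReal.ofReal (N : ℝ) :=
              ENNReal.ofReal_le_ofReal (by linarith)
          _ = (N : ℝ≥0∞) := ENNReal.ofReal_natCast N
      refine h1.trans ?_
      calc (N : ℝ≥0∞) = ∑ j ∈ Finset.range N,
            Set.indicator {ω' | ((m + j : ℕ) : ℝ) < |X n ω'|} (fun _ => (1 : ℝ≥0∞)) ω := by
            rw [Finset.sum_congr rfl fun j hj => Set.indicator_of_mem ?_ _]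
            · simp
            · have hj' : (j : ℝ) < (N : ℝ) := by exact_mod_cast Finset.mem_range.mp hj
              have hNle : (N : ℝ) ≤ |X n ω| - m := Nat.floor_le hc0
              show ((m + j : ℕ) : ℝ) < |X n ω|
              push_cast
              linarith
        _ ≤ ∑' j : ℕ, Set.indicator {ω' | ((m + j : ℕ) : ℝ) < |X n ω'|}
              (fun _ => (1 : ℝ≥0∞)) ω := ENNReal.sum_le_tsum _
    · rw [Set.indicator_of_notMem hω]; exact zero_le
  -- integral bound via lintegrals
  have hnonneg : 0 ≤ᵐ[P.restrict S] fun ω => |X n ω| - a :=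
    (ae_restrict_iff' hSmeas).2 (ae_of_all _ fun ω hω => sub_nonneg.2 hω)
  have heq : ∫ ω in S, (|X n ω| - a) ∂P
      = (∫⁻ ω in S, ENNReal.ofReal (|X n ω| - a) ∂P).toReal :=
    integral_eq_lintegral_of_nonneg_ae hnonneg
      (((hX n).abs.sub measurable_const).aestronglyMeasurable)
  have hlint : (∫⁻ ω in S, ENNReal.ofReal (|X n ω| - a) ∂P)
      ≤ ∑' j : ℕ, P {ω | ((m + j : ℕ) : ℝ) < |X n ω|} := by
    rw [← lintegral_indicator hSmeas _]
    calc ∫⁻ ω, S.indicator (fun ω => ENNReal.ofReal (|X n ω| - a)) ω ∂P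
        ≤ ∫⁻ ω, ∑' j : ℕ, Set.indicator {ω' | ((m + j : ℕ) : ℝ) < |X n ω'|}
            (fun _ => (1 : ℝ≥0∞)) ω ∂P := lintegral_mono key
      _ = ∑' j : ℕ, ∫⁻ ω, Set.indicator {ω' | ((m + j : ℕ) : ℝ) < |X n ω'|}
            (fun _ => (1 : ℝ≥0∞)) ω ∂P :=
          lintegral_tsum fun j => ((measurable_const.indicator (hsetmeas j)).aemeasurable)
      _ = ∑' j : ℕ, P {ω | ((m + j : ℕ) : ℝ) < |X n ω|} := by
          refine tsum_congr fun j => ?_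
          rw [lintegral_indicator (hsetmeas j)]
          simp
  have hsum_lt : (∑' j : ℕ, P {ω | ((m + j : ℕ) : ℝ) < |X n ω|}) < ENNReal.ofReal ε :=
    lt_of_le_of_lt (le_iSup (fun k : ℕ => ∑' j : ℕ, P {ω | ((m + j : ℕ) : ℝ) < |X k ω|}) n) hm
  have hfin : (∫⁻ ω in S, ENNReal.ofReal (|X n ω| - a) ∂P) < ENNReal.ofReal ε :=
    lt_of_le_of_lt hlint hsum_lt
  rw [heq]
  exact ENNReal.toReal_lt_of_lt_ofReal hfin
end

section
/- Let (Ω, F, P) be a probability space and let (X_n)_{n≥1} be a sequence of integrable real-valued random variables on it. Then (X_n) is uniformly integrable (UI), i.e. lim_{a→∞} sup_{n≥1} E[|X_n|·1_{{|X_n|≥a}}] = 0, if and only if (X_n) is W*-uniformly integrable (W*-UI), i.e. lim_{m→∞} sup_{k≥1} Σ_{n=m}^{∞} P(|X_k| > n) = 0 (the sum being over integers n ≥ m). -/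
open MeasureTheory Filter Topology
open scoped ENNReal

lemma wstar_upper {Ω : Type*} [MeasurableSpace Ω] (P : Measure Ω)
    (Y : Ω → ℝ) (hY : Measurable Y) (hpos : ∀ ω, 0 ≤ Y ω) (m : ℕ) (hm : 1 ≤ m) :
    ∑' j : ℕ, P {ω | ((m + j : ℕ) : ℝ) < Y ω}
      ≤ ∫⁻ ω in {ω | (m : ℝ) ≤ Y ω}, ENNReal.ofReal (Y ω) ∂P := by
  have hms : ∀ j : ℕ, MeasurableSet {ω | ((m + j : ℕ) : ℝ) < Y ω} :=
    fun j => measurableSet_lt measurable_const hY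
  have hS : MeasurableSet {ω | (m : ℝ) ≤ Y ω} := measurableSet_le measurable_const hY
  have h1 : ∀ j : ℕ, P {ω | ((m + j : ℕ) : ℝ) < Y ω}
      = ∫⁻ ω, Set.indicator {ω | ((m + j : ℕ) : ℝ) < Y ω} (fun _ => (1 : ℝ≥0∞)) ω ∂P := by
    intro j
    rw [lintegral_indicator (hms j)]
    simp
  calc ∑' j : ℕ, P {ω | ((m + j : ℕ) : ℝ) < Y ω}
      = ∫⁻ ω, ∑' j : ℕ, Set.indicator {ω | ((m + j : ℕ) : ℝ) < Y ω} (fun _ => (1 : ℝ≥0∞)) ω ∂P := by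
        rw [lintegral_tsum (fun j => (measurable_const.indicator (hms j)).aemeasurable)]
        exact tsum_congr h1
    _ ≤ ∫⁻ ω, Set.indicator {ω | (m : ℝ) ≤ Y ω} (fun ω => ENNReal.ofReal (Y ω)) ω ∂P := by
        refine lintegral_mono fun ω => ?_
        by_cases h : (m : ℝ) < Y ω
        · have hmem : ω ∈ {ω | (m : ℝ) ≤ Y ω} := le_of_lt h
          rw [Set.indicator_of_mem hmem]
          have hz : ∀ j : ℕ, j ∉ Finset.range ⌈Y ω - m⌉₊ →
              Set.indicator {ω | ((m + j : ℕ) : ℝ) < Y ω} (fun _ => (1 : ℝ≥0∞)) ω = 0 := by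
            intro j hj
            rw [Finset.mem_range, not_lt] at hj
            refine Set.indicator_of_notMem ?_ _
            simp only [Set.mem_setOf_eq, not_lt]
            have : Y ω - m ≤ (⌈Y ω - m⌉₊ : ℝ) := Nat.le_ceil _
            have hj' : (⌈Y ω - m⌉₊ : ℝ) ≤ j := by exact_mod_cast hj
            push_cast
            linarith
          rw [tsum_eq_sum hz]
          have hle : ∑ j ∈ Finset.range ⌈Y ω - m⌉₊,
              Set.indicator {ω | ((m + j : ℕ) : ℝ) < Y ω} (fun _ => (1 : ℝ≥0∞)) ω
              ≤ ∑ _j ∈ Finset.range ⌈Y ω - m⌉₊, (1 : ℝ≥0∞) := by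
            refine Finset.sum_le_sum fun j _ => ?_
            classical
            rw [Set.indicator_apply]
            split_ifs <;> simp
          refine hle.trans ?_
          simp only [Finset.sum_const, Finset.card_range, nsmul_eq_mul, mul_one]
          rw [show ((⌈Y ω - m⌉₊ : ℝ≥0∞)) = ENNReal.ofReal ((⌈Y ω - m⌉₊ : ℝ)) by
            rw [ENNReal.ofReal_natCast]]
          refine ENNReal.ofReal_le_ofReal ?_
          have h1 : (⌈Y ω - m⌉₊ : ℝ) < (Y ω - m) + 1 :=
            Nat.ceil_lt_add_one (by linarith)
          have hm' : (1 : ℝ) ≤ m := by exact_mod_cast hm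
          linarith
        · push_neg at h
          have : ∀ j : ℕ, Set.indicator {ω | ((m + j : ℕ) : ℝ) < Y ω} (fun _ => (1 : ℝ≥0∞)) ω = 0 := by
            intro j
            refine Set.indicator_of_notMem ?_ _
            simp only [Set.mem_setOf_eq, not_lt]
            push_cast
            have : (0:ℝ) ≤ j := Nat.cast_nonneg j
            linarith
          rw [tsum_congr this, tsum_zero]
          exact zero_le
    _ = ∫⁻ ω in {ω | (m : ℝ) ≤ Y ω}, ENNReal.ofReal (Y ω) ∂P := by
        rw [lintegral_indicator hS]

lemma wstar_lower {Ω : Type*} [MeasurableSpace Ω] (P : Measure Ω)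
    (Y : Ω → ℝ) (hY : Measurable Y) (hpos : ∀ ω, 0 ≤ Y ω) (m : ℕ) :
    ∫⁻ ω in {ω | (2 * (m + 1) : ℝ) ≤ Y ω}, ENNReal.ofReal (Y ω) ∂P
      ≤ 2 * ∑' j : ℕ, P {ω | ((m + j : ℕ) : ℝ) < Y ω} := by
  have hms : ∀ j : ℕ, MeasurableSet {ω | ((m + j : ℕ) : ℝ) < Y ω} :=
    fun j => measurableSet_lt measurable_const hY
  have hS : MeasurableSet {ω | (2 * (m + 1) : ℝ) ≤ Y ω} := measurableSet_le measurable_const hY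
  have h1 : ∀ j : ℕ, P {ω | ((m + j : ℕ) : ℝ) < Y ω}
      = ∫⁻ ω, Set.indicator {ω | ((m + j : ℕ) : ℝ) < Y ω} (fun _ => (1 : ℝ≥0∞)) ω ∂P := by
    intro j
    rw [lintegral_indicator (hms j)]
    simp
  have hmeas : Measurable fun ω => ∑' j : ℕ,
      Set.indicator {ω | ((m + j : ℕ) : ℝ) < Y ω} (fun _ => (1 : ℝ≥0∞)) ω :=
    Measurable.ennreal_tsum fun j => measurable_const.indicator (hms j)
  calc ∫⁻ ω in {ω | (2 * (m + 1) : ℝ) ≤ Y ω}, ENNReal.ofReal (Y ω) ∂P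
      = ∫⁻ ω, Set.indicator {ω | (2 * (m + 1) : ℝ) ≤ Y ω} (fun ω => ENNReal.ofReal (Y ω)) ω ∂P := by
        rw [lintegral_indicator hS]
    _ ≤ ∫⁻ ω, 2 * ∑' j : ℕ, Set.indicator {ω | ((m + j : ℕ) : ℝ) < Y ω} (fun _ => (1 : ℝ≥0∞)) ω ∂P := by
        refine lintegral_mono fun ω => ?_
        by_cases h : (2 * (m + 1) : ℝ) ≤ Y ω
        · have hmem : ω ∈ {ω | (2 * (m + 1) : ℝ) ≤ Y ω} := h
          rw [Set.indicator_of_mem hmem]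
          have hfl : ∀ j ∈ Finset.range ⌊Y ω - m⌋₊,
              Set.indicator {ω | ((m + j : ℕ) : ℝ) < Y ω} (fun _ => (1 : ℝ≥0∞)) ω = 1 := by
            intro j hj
            rw [Finset.mem_range] at hj
            refine Set.indicator_of_mem ?_ _
            simp only [Set.mem_setOf_eq]
            have h2 : (⌊Y ω - m⌋₊ : ℝ) ≤ Y ω - m := Nat.floor_le (by linarith)
            have h3 : (j : ℝ) + 1 ≤ (⌊Y ω - m⌋₊ : ℝ) := by exact_mod_cast hj
            push_cast
            linarith
          have hsum : (⌊Y ω - m⌋₊ : ℝ≥0∞)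
              ≤ ∑' j : ℕ, Set.indicator {ω | ((m + j : ℕ) : ℝ) < Y ω} (fun _ => (1 : ℝ≥0∞)) ω := by
            have := ENNReal.sum_le_tsum (f := fun j : ℕ =>
              Set.indicator {ω | ((m + j : ℕ) : ℝ) < Y ω} (fun _ => (1 : ℝ≥0∞)) ω)
              (Finset.range ⌊Y ω - m⌋₊)
            refine le_trans ?_ this
            rw [Finset.sum_congr rfl hfl]
            simp
          calc ENNReal.ofReal (Y ω) ≤ 2 * (⌊Y ω - m⌋₊ : ℝ≥0∞) := by
                rw [show ((⌊Y ω - m⌋₊ : ℝ≥0∞)) = ENNReal.ofReal ((⌊Y ω - m⌋₊ : ℝ)) by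
                  rw [ENNReal.ofReal_natCast],
                  show (2 : ℝ≥0∞) = ENNReal.ofReal 2 by simp,
                  ← ENNReal.ofReal_mul (by norm_num)]
                refine ENNReal.ofReal_le_ofReal ?_
                have h4 : Y ω - m - 1 < (⌊Y ω - m⌋₊ : ℝ) := Nat.sub_one_lt_floor _
                linarith
            _ ≤ 2 * ∑' j : ℕ, Set.indicator {ω | ((m + j : ℕ) : ℝ) < Y ω} (fun _ => (1 : ℝ≥0∞)) ω :=
                mul_le_mul_right hsum 2
        · have hmem : ω ∉ {ω | (2 * (m + 1) : ℝ) ≤ Y ω} := h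
          rw [Set.indicator_of_notMem hmem]
          exact zero_le
    _ = 2 * ∑' j : ℕ, P {ω | ((m + j : ℕ) : ℝ) < Y ω} := by
        rw [lintegral_const_mul 2 hmeas,
          lintegral_tsum (fun j => (measurable_const.indicator (hms j)).aemeasurable)]
        congr 1
        exact (tsum_congr h1).symm

/-- UI ⇔ W*-UI in a probability space, for integrable random variables.
UI: lim_{a→∞} sup_n E[|X_n|·1_{|X_n|≥a}] = 0;
W*-UI: lim_{m→∞} sup_k Σ_{n=m}^∞ P(|X_k| > n) = 0 (sum over integers n ≥ m,
rendered by the index shift n = m + j). -/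
theorem ui_iff_wstarui {Ω : Type*} [MeasurableSpace Ω] (P : Measure Ω)
    [IsProbabilityMeasure P] (X : ℕ → Ω → ℝ) (hX : ∀ n, Measurable (X n))
    (hint : ∀ n, Integrable (X n) P) :
    (∀ ε : ℝ, 0 < ε → ∃ a₀ : ℝ, ∀ a ≥ a₀, ∀ n : ℕ,
        ∫ ω in {ω | a ≤ |X n ω|}, |X n ω| ∂P < ε)
    ↔ Tendsto (fun m : ℕ => ⨆ k : ℕ, ∑' j : ℕ,
        P {ω | ((m + j : ℕ) : ℝ) < |X k ω|}) atTop (𝓝 0) := by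
  constructor
  · intro hUI
    rw [ENNReal.tendsto_atTop_zero]
    intro ε hε
    by_cases hεt : ε = ⊤
    · exact ⟨0, fun m _ => hεt ▸ le_top⟩
    · have hε' : 0 < ε.toReal := ENNReal.toReal_pos hε.ne' hεt
      obtain ⟨a₀, ha₀⟩ := hUI ε.toReal hε'
      refine ⟨max 1 ⌈a₀⌉₊, fun m hm => ?_⟩
      have hm1 : 1 ≤ m := le_trans (le_max_left _ _) hm
      have hma : (m : ℝ) ≥ a₀ := by
        have h5 : ⌈a₀⌉₊ ≤ m := le_trans (le_max_right _ _) hm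
        calc a₀ ≤ (⌈a₀⌉₊ : ℝ) := Nat.le_ceil _
          _ ≤ m := by exact_mod_cast h5
      refine iSup_le fun k => ?_
      have key := wstar_upper P (fun ω => |X k ω|) (hX k).abs (fun ω => abs_nonneg _) m hm1
      refine le_trans key ?_
      have hint' : Integrable (fun ω => |X k ω|) (P.restrict {ω | (m : ℝ) ≤ |X k ω|}) :=
        ((hint k).abs).restrict
      rw [← MeasureTheory.ofReal_integral_eq_lintegral_ofReal hint'
        (Filter.Eventually.of_forall fun ω => abs_nonneg _)]
      calc ENNReal.ofReal (∫ ω in {ω | (m : ℝ) ≤ |X k ω|}, |X k ω| ∂P)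
          ≤ ENNReal.ofReal ε.toReal := ENNReal.ofReal_le_ofReal (le_of_lt (ha₀ m hma k))
        _ = ε := ENNReal.ofReal_toReal hεt
  · intro hW ε hε
    obtain ⟨m, hm⟩ := (ENNReal.tendsto_atTop_zero.mp hW) (ENNReal.ofReal (ε / 4))
      (ENNReal.ofReal_pos.mpr (by linarith))
    refine ⟨(2 * (m + 1) : ℝ), fun a ha n => ?_⟩
    have hSle : ∑' j : ℕ, P {ω | ((m + j : ℕ) : ℝ) < |X n ω|} ≤ ENNReal.ofReal (ε / 4) :=
      le_trans (le_iSup (fun k => ∑' j : ℕ, P {ω | ((m + j : ℕ) : ℝ) < |X k ω|}) n) (hm m le_rfl)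
    have key := wstar_lower P (fun ω => |X n ω|) (hX n).abs (fun ω => abs_nonneg _) m
    have hset : {ω | a ≤ |X n ω|} ⊆ {ω | (2 * (m + 1) : ℝ) ≤ |X n ω|} :=
      fun ω hω => le_trans ha hω
    have hint' : Integrable (fun ω => |X n ω|) (P.restrict {ω | a ≤ |X n ω|}) :=
      ((hint n).abs).restrict
    have h0 : ENNReal.ofReal (∫ ω in {ω | a ≤ |X n ω|}, |X n ω| ∂P)
        = ∫⁻ ω in {ω | a ≤ |X n ω|}, ENNReal.ofReal (|X n ω|) ∂P :=
      MeasureTheory.ofReal_integral_eq_lintegral_ofReal hint'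
        (Filter.Eventually.of_forall fun ω => abs_nonneg _)
    have h2 : ∫⁻ ω in {ω | a ≤ |X n ω|}, ENNReal.ofReal (|X n ω|) ∂P
        ≤ ∫⁻ ω in {ω | (2 * (m + 1) : ℝ) ≤ |X n ω|}, ENNReal.ofReal (|X n ω|) ∂P :=
      lintegral_mono_set hset
    have h3 : (2 : ℝ≥0∞) * ∑' j : ℕ, P {ω | ((m + j : ℕ) : ℝ) < |X n ω|}
        ≤ ENNReal.ofReal (ε / 2) := by
      calc (2 : ℝ≥0∞) * ∑' j : ℕ, P {ω | ((m + j : ℕ) : ℝ) < |X n ω|}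
          ≤ 2 * ENNReal.ofReal (ε / 4) := mul_le_mul_right hSle 2
        _ = ENNReal.ofReal (ε / 2) := by
            rw [show (2 : ℝ≥0∞) = ENNReal.ofReal 2 by simp,
              ← ENNReal.ofReal_mul (by norm_num)]
            congr 1
            ring
    have h4 : ENNReal.ofReal (∫ ω in {ω | a ≤ |X n ω|}, |X n ω| ∂P)
        ≤ ENNReal.ofReal (ε / 2) := by
      rw [h0]; exact le_trans h2 (le_trans key h3)
    have h5 : ∫ ω in {ω | a ≤ |X n ω|}, |X n ω| ∂P ≤ ε / 2 :=
      (ENNReal.ofReal_le_ofReal_iff (by linarith)).mp h4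
    linarith
end

section
/- Let (Ω, F) be a measurable space, 𝒫 a nonempty family of probability measures on (Ω, F), and define the upper expectation 𝓔[Y] := sup_{μ∈𝒫} ∫ Y dμ for nonnegative measurable functions Y. Let K be a family of measurable real-valued functions on Ω with sup_{X∈K} 𝓔[|X|] controlled as below. Then K is uniformly integrable, i.e. lim_{c→∞} sup_{X∈K} 𝓔[|X|·1_{{|X|≥c}}] = 0, if and only if there exists a nonnegative function φ on [0,∞) such that lim_{t→∞} φ(t)/t = ∞ and sup_{X∈K} 𝓔[φ(|X|)] < ∞. -/
open MeasureTheory Filter Topology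

/-- Upper (sublinear) expectation associated with a family of probability measures:
𝓔[f] = sup_{μ∈Pr} ∫ f dμ, for nonnegative f, realized via the lower Lebesgue integral. -/
noncomputable def upperExp {Ω : Type*} [MeasurableSpace Ω]
    (Pr : Set (MeasureTheory.Measure Ω)) (f : Ω → ℝ) : ENNReal :=
  ⨆ μ ∈ Pr, ∫⁻ ω, ENNReal.ofReal (f ω) ∂μ

private lemma ofReal_indicator' {Ω : Type*} (s : Set Ω) (f : Ω → ℝ) (ω : Ω) :
    ENNReal.ofReal (s.indicator f ω) = s.indicator (fun ω => ENNReal.ofReal (f ω)) ω := by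
  by_cases h : ω ∈ s <;> simp [h]

/-- de La Vallée Poussin criterion for uniform integrability under an upper expectation:
K is UI (lim_{c→∞} sup_{X∈K} 𝓔[|X|·1_{|X|≥c}] = 0) iff there is a nonnegative
function φ on [0,∞) with φ(t)/t → ∞ and sup_{X∈K} 𝓔[φ(|X|)] < ∞. -/
theorem de_la_vallee_poussin {Ω : Type*} [MeasurableSpace Ω]
    (Pr : Set (Measure Ω)) (hne : Pr.Nonempty) (hP : ∀ μ ∈ Pr, IsProbabilityMeasure μ)
    (K : Set (Ω → ℝ)) (hK : ∀ X ∈ K, Measurable X)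
    (hL1 : ∀ X ∈ K, upperExp Pr (fun ω => |X ω|) < ⊤) :
    Tendsto (fun c : ℝ => ⨆ X ∈ K,
        upperExp Pr ({ω | c ≤ |X ω|}.indicator fun ω => |X ω|)) atTop (𝓝 0)
    ↔ ∃ φ : ℝ → ℝ, (∀ t : ℝ, 0 ≤ t → 0 ≤ φ t) ∧
        Tendsto (fun t : ℝ => φ t / t) atTop atTop ∧
        (⨆ X ∈ K, upperExp Pr fun ω => φ |X ω|) < ⊤ := by
  set S : ℝ → ENNReal := fun c => ⨆ X ∈ K,
      upperExp Pr ({ω | c ≤ |X ω|}.indicator fun ω => |X ω|) with hS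
  constructor
  · intro hUI
    have hmem : ∀ n : ℕ, ∃ N : ℝ, ∀ c ≥ N, S c ≤ (2 : ENNReal)⁻¹ ^ n := by
      intro n
      exact ENNReal.tendsto_atTop_zero.mp hUI _
        (ENNReal.pow_pos (ENNReal.inv_pos.mpr (by norm_num)) n)
    choose N hN using hmem
    set c : ℕ → ℝ := fun n => max (N n) ((n : ℝ) + 1) with hcdef
    have hc1 : ∀ n : ℕ, (n : ℝ) + 1 ≤ c n := fun n => le_max_right _ _
    have hcpos : ∀ n, (1 : ℝ) ≤ c n := fun n => by
      have h := hc1 n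
      have h0 : (0:ℝ) ≤ (n : ℝ) := Nat.cast_nonneg n
      linarith
    have hcS : ∀ n, S (c n) ≤ (2 : ENNReal)⁻¹ ^ n := fun n => hN n _ (le_max_left _ _)
    have hzero : ∀ t : ℝ, ∀ n ∉ Finset.range ⌈t⌉₊, max (t - c n) 0 = 0 := by
      intro t n hn
      have h1 : (⌈t⌉₊ : ℝ) ≤ n := by exact_mod_cast Nat.le_of_not_lt (by simpa using hn)
      have h2 : t ≤ (n : ℝ) := le_trans (Nat.le_ceil t) h1
      have := hc1 n
      exact max_eq_right (by linarith)
    have hsum : ∀ t : ℝ, Summable (fun n => max (t - c n) 0) := fun t =>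
      summable_of_ne_finset_zero (hzero t)
    refine ⟨fun t => ∑' n, max (t - c n) 0, fun t _ => tsum_nonneg fun n => le_max_right _ _,
      ?_, ?_⟩
    · -- φ t / t → ∞
      rw [tendsto_atTop_atTop]
      intro b
      set Nn : ℕ := ⌈2 * b⌉₊ + 1 with hNn
      set T : ℝ := ∑ n ∈ Finset.range Nn, 2 * c n with hT
      have hterm : ∀ n ∈ Finset.range Nn, (0:ℝ) ≤ 2 * c n := fun n _ => by
        linarith [hcpos n]
      have hT2 : (2:ℝ) ≤ T := by
        have h0 : (0:ℕ) ∈ Finset.range Nn := by simp [hNn]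
        have := Finset.single_le_sum hterm h0
        linarith [hcpos 0]
      refine ⟨T, fun t ht => ?_⟩
      have htpos : (0:ℝ) < t := by linarith
      have hhalf : ∀ n ∈ Finset.range Nn, c n ≤ t / 2 := by
        intro n hn
        have := Finset.single_le_sum hterm hn
        linarith
      have hφ : (Nn : ℝ) * (t / 2) ≤ ∑' n, max (t - c n) 0 := by
        calc (Nn : ℝ) * (t / 2) = ∑ _n ∈ Finset.range Nn, t / 2 := by
              simp [Finset.sum_const, mul_comm]
          _ ≤ ∑ n ∈ Finset.range Nn, max (t - c n) 0 :=
              Finset.sum_le_sum fun n hn =>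
                le_trans (by linarith [hhalf n hn]) (le_max_left _ _)
          _ ≤ ∑' n, max (t - c n) 0 :=
              Summable.sum_le_tsum _ (fun n _ => le_max_right _ _) (hsum t)
      rw [le_div_iff₀ htpos]
      have h2b : 2 * b ≤ (Nn : ℝ) := by
        have := Nat.le_ceil (2 * b)
        have h' : (⌈2*b⌉₊ : ℝ) ≤ Nn := by exact_mod_cast Nat.le_succ _
        linarith
      nlinarith
    · -- bound
      have hfin : (∑' n : ℕ, (2 : ENNReal)⁻¹ ^ n) < ⊤ := by
        rw [ENNReal.tsum_geometric]
        simp [ENNReal.one_sub_inv_two, lt_top_iff_ne_top]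
      refine lt_of_le_of_lt (iSup₂_le fun X hX => iSup₂_le fun μ hμ => ?_) hfin
      calc ∫⁻ ω, ENNReal.ofReal (∑' n, max (|X ω| - c n) 0) ∂μ
          = ∫⁻ ω, ∑' n, ENNReal.ofReal (max (|X ω| - c n) 0) ∂μ := by
            congr 1; funext ω
            exact ENNReal.ofReal_tsum_of_nonneg (fun n => le_max_right _ _) (hsum _)
        _ = ∑' n, ∫⁻ ω, ENNReal.ofReal (max (|X ω| - c n) 0) ∂μ := by
            refine lintegral_tsum fun n => ?_
            exact (Measurable.ennreal_ofReal
              (((hK X hX).abs.sub measurable_const).max measurable_const)).aemeasurable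
        _ ≤ ∑' n, (2 : ENNReal)⁻¹ ^ n := by
            refine ENNReal.tsum_le_tsum fun n => ?_
            calc ∫⁻ ω, ENNReal.ofReal (max (|X ω| - c n) 0) ∂μ
                ≤ ∫⁻ ω, ENNReal.ofReal (({ω | c n ≤ |X ω|}.indicator fun ω => |X ω|) ω) ∂μ := by
                  refine lintegral_mono fun ω => ENNReal.ofReal_le_ofReal ?_
                  by_cases h : c n ≤ |X ω|
                  · rw [Set.indicator_of_mem (show ω ∈ {ω | c n ≤ |X ω|} from h)]
                    exact max_le (by linarith [hcpos n]) (abs_nonneg _)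
                  · rw [Set.indicator_of_notMem (show ω ∉ {ω | c n ≤ |X ω|} from h)]
                    push_neg at h
                    exact le_of_eq (max_eq_right (by linarith))
              _ ≤ upperExp Pr ({ω | c n ≤ |X ω|}.indicator fun ω => |X ω|) :=
                  le_iSup₂_of_le μ hμ le_rfl
              _ ≤ S (c n) := le_iSup₂_of_le X hX le_rfl
              _ ≤ (2 : ENNReal)⁻¹ ^ n := hcS n
  · rintro ⟨φ, hφ0, hφt, hM⟩
    set M : ENNReal := ⨆ X ∈ K, upperExp Pr fun ω => φ |X ω| with hMdef
    rw [hS]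
    rw [ENNReal.tendsto_atTop_zero]
    intro ε hε
    rcases eq_or_ne ε ⊤ with rfl | hεt
    · exact ⟨0, fun _ _ => le_top⟩
    have hεR : 0 < ε.toReal := ENNReal.toReal_pos hε.ne' hεt
    set A : ℝ := M.toReal / ε.toReal + 1 with hA
    have hApos : 0 < A := by positivity
    obtain ⟨c₀, hc₀⟩ := (tendsto_atTop_atTop.mp hφt) A
    refine ⟨max c₀ 1, fun cc hcc => ?_⟩
    have hcc0 : c₀ ≤ cc := le_trans (le_max_left _ _) hcc
    have hcc1 : (1:ℝ) ≤ cc := le_trans (le_max_right _ _) hcc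
    refine iSup₂_le fun X hX => iSup₂_le fun μ hμ => ?_
    -- pointwise bound
    have hpt : ∀ ω, ENNReal.ofReal (({ω | cc ≤ |X ω|}.indicator fun ω => |X ω|) ω)
        * ENNReal.ofReal A ≤ ENNReal.ofReal (φ |X ω|) := by
      intro ω
      by_cases h : cc ≤ |X ω|
      · rw [Set.indicator_of_mem (show ω ∈ {ω | cc ≤ |X ω|} from h), ← ENNReal.ofReal_mul (abs_nonneg _)]
        refine ENNReal.ofReal_le_ofReal ?_
        have hdiv : A ≤ φ |X ω| / |X ω| := hc₀ _ (le_trans hcc0 h)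
        have hXpos : (0:ℝ) < |X ω| := by linarith
        rw [le_div_iff₀ hXpos] at hdiv
        linarith
      · rw [Set.indicator_of_notMem (show ω ∉ {ω | cc ≤ |X ω|} from h)]
        simp
    have hmeas : Measurable fun ω =>
        ENNReal.ofReal (({ω | cc ≤ |X ω|}.indicator fun ω => |X ω|) ω) := by
      have : (fun ω => ENNReal.ofReal (({ω | cc ≤ |X ω|}.indicator fun ω => |X ω|) ω))
          = ({ω | cc ≤ |X ω|}.indicator fun ω => ENNReal.ofReal |X ω|) := by
        funext ω; exact ofReal_indicator' _ _ ω
      rw [this]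
      exact Measurable.indicator (Measurable.ennreal_ofReal (hK X hX).abs)
        (measurableSet_le measurable_const (hK X hX).abs)
    have hint : (∫⁻ ω, ENNReal.ofReal (({ω | cc ≤ |X ω|}.indicator fun ω => |X ω|) ω) ∂μ)
        * ENNReal.ofReal A ≤ M := by
      rw [← lintegral_mul_const _ hmeas]
      calc ∫⁻ ω, ENNReal.ofReal (({ω | cc ≤ |X ω|}.indicator fun ω => |X ω|) ω)
            * ENNReal.ofReal A ∂μ
          ≤ ∫⁻ ω, ENNReal.ofReal (φ |X ω|) ∂μ := lintegral_mono hpt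
        _ ≤ upperExp Pr (fun ω => φ |X ω|) := le_iSup₂_of_le μ hμ le_rfl
        _ ≤ M := le_iSup₂_of_le X hX le_rfl
    have hMA : M ≤ ε * ENNReal.ofReal A := by
      have hMne : M ≠ ⊤ := hM.ne
      have h1 : ε * ENNReal.ofReal A = ENNReal.ofReal (ε.toReal * A) := by
        rw [ENNReal.ofReal_mul hεR.le, ENNReal.ofReal_toReal hεt]
      rw [h1]
      have h2 : ε.toReal * A = M.toReal + ε.toReal := by
        rw [hA, mul_add, mul_one, ← mul_div_assoc, mul_div_cancel_left₀ _ hεR.ne']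
      rw [h2]
      calc M = ENNReal.ofReal M.toReal := (ENNReal.ofReal_toReal hMne).symm
        _ ≤ ENNReal.ofReal (M.toReal + ε.toReal) :=
            ENNReal.ofReal_le_ofReal (by linarith)
    have hAne : ENNReal.ofReal A ≠ 0 := by
      simp [ENNReal.ofReal_eq_zero, not_le, hApos]
    have hAnet : ENNReal.ofReal A ≠ ⊤ := ENNReal.ofReal_ne_top
    rw [← ENNReal.mul_le_mul_iff_left hAne hAnet]
    exact le_trans hint hMA
end

section
/- Let (Ω, F) be a measurable space, 𝒫 a nonempty family of probability measures on (Ω, F), and 𝓔[Y] := sup_{μ∈𝒫} ∫ Y dμ the associated upper expectation. If a family K of measurable real-valued functions on Ω is S-uniformly integrable, i.e. lim_{m→∞} sup_{X∈K} Σ_{n=m}^{∞} 𝓔[1_{{|X|>n}}] = 0 (the sum over integers n ≥ m), then K is W-uniformly integrable, i.e. lim_{a→∞} sup_{X∈K} 𝓔[(|X|−a)·1_{{|X|≥a}}] = 0. -/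
open MeasureTheory Filter Topology

/-- S-UI ⇒ W-UI under an upper expectation:
if lim_{m→∞} sup_{X∈K} Σ_{n=m}^∞ 𝓔[1_{|X|>n}] = 0 (sum over integers n ≥ m,
rendered by the index shift n = m + j, with 𝓔[1_A] = sup_{μ∈Pr} μ(A)) then
lim_{a→∞} sup_{X∈K} 𝓔[(|X|−a)·1_{|X|≥a}] = 0. -/
theorem sui_implies_wui_sublinear {Ω : Type*} [MeasurableSpace Ω]
    (Pr : Set (Measure Ω)) (hne : Pr.Nonempty) (hP : ∀ μ ∈ Pr, IsProbabilityMeasure μ)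
    (K : Set (Ω → ℝ)) (hK : ∀ X ∈ K, Measurable X)
    (hSUI : Tendsto (fun m : ℕ => ⨆ X ∈ K, ∑' j : ℕ,
        ⨆ μ ∈ Pr, μ {ω | ((m + j : ℕ) : ℝ) < |X ω|}) atTop (𝓝 0)) :
    Tendsto (fun a : ℝ => ⨆ X ∈ K,
        upperExp Pr ({ω | a ≤ |X ω|}.indicator fun ω => |X ω| - a)) atTop (𝓝 0) := by
  set F : ℕ → ENNReal := fun m => ⨆ X ∈ K, ∑' j : ℕ,
      ⨆ μ ∈ Pr, μ {ω | ((m + j : ℕ) : ℝ) < |X ω|} with hF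
  have key : ∀ a : ℝ, 0 ≤ a →
      (⨆ X ∈ K, upperExp Pr ({ω | a ≤ |X ω|}.indicator fun ω => |X ω| - a)) ≤ F ⌊a⌋₊ := by
    intro a ha
    refine iSup₂_le fun X hX => ?_
    have hS : upperExp Pr ({ω | a ≤ |X ω|}.indicator fun ω => |X ω| - a)
        ≤ ∑' j : ℕ, ⨆ μ ∈ Pr, μ {ω | ((⌊a⌋₊ + j : ℕ) : ℝ) < |X ω|} := by
      refine iSup₂_le fun μ hμ => ?_
      have hmeas : ∀ j : ℕ, MeasurableSet {ω | ((⌊a⌋₊ + j : ℕ) : ℝ) < |X ω|} :=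
        fun j => measurableSet_lt measurable_const (hK X hX).abs
      have hpt : ∀ ω, ENNReal.ofReal (({ω | a ≤ |X ω|}.indicator fun ω => |X ω| - a) ω)
          ≤ ∑' j : ℕ, {ω | ((⌊a⌋₊ + j : ℕ) : ℝ) < |X ω|}.indicator (fun _ => (1 : ENNReal)) ω := by
        intro ω
        by_cases h : ω ∈ {ω | a ≤ |X ω|}
        · rw [Set.indicator_of_mem h]
          have hy : a ≤ |X ω| := h
          set y := |X ω| with hyd
          set N := ⌈y - a⌉₊ with hN
          have h1 : ENNReal.ofReal (y - a) ≤ (N : ENNReal) := by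
            rw [← ENNReal.ofReal_natCast]
            exact ENNReal.ofReal_le_ofReal (Nat.le_ceil _)
          refine h1.trans ?_
          have hNeq : (N : ENNReal)
              = ∑ j ∈ Finset.range N,
                {ω | ((⌊a⌋₊ + j : ℕ) : ℝ) < |X ω|}.indicator (fun _ => (1 : ENNReal)) ω := by
            have : ∀ j ∈ Finset.range N,
                {ω | ((⌊a⌋₊ + j : ℕ) : ℝ) < |X ω|}.indicator (fun _ => (1 : ENNReal)) ω = 1 := by
              intro j hj
              rw [Set.indicator_of_mem]
              have hj' : (j : ℝ) + 1 ≤ N := by exact_mod_cast Finset.mem_range.mp hj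
              have hceil : (N : ℝ) < (y - a) + 1 :=
                Nat.ceil_lt_add_one (by linarith)
              have hfl : (⌊a⌋₊ : ℝ) ≤ a := Nat.floor_le ha
              show ((⌊a⌋₊ + j : ℕ) : ℝ) < |X ω|
              push_cast
              rw [← hyd]
              linarith
            rw [Finset.sum_congr rfl this]
            simp
          rw [hNeq]
          exact ENNReal.sum_le_tsum _
        · rw [Set.indicator_of_notMem h]
          simp
      calc ∫⁻ ω, ENNReal.ofReal (({ω | a ≤ |X ω|}.indicator fun ω => |X ω| - a) ω) ∂μ
          ≤ ∫⁻ ω, ∑' j : ℕ,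
              {ω | ((⌊a⌋₊ + j : ℕ) : ℝ) < |X ω|}.indicator (fun _ => (1 : ENNReal)) ω ∂μ :=
            lintegral_mono hpt
        _ = ∑' j : ℕ, ∫⁻ ω,
              {ω | ((⌊a⌋₊ + j : ℕ) : ℝ) < |X ω|}.indicator (fun _ => (1 : ENNReal)) ω ∂μ :=
            lintegral_tsum fun j => ((measurable_const.indicator (hmeas j)).aemeasurable)
        _ = ∑' j : ℕ, μ {ω | ((⌊a⌋₊ + j : ℕ) : ℝ) < |X ω|} := by
            refine tsum_congr fun j => ?_
            rw [lintegral_indicator (hmeas j)]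
            simp
        _ ≤ ∑' j : ℕ, ⨆ μ ∈ Pr, μ {ω | ((⌊a⌋₊ + j : ℕ) : ℝ) < |X ω|} :=
            ENNReal.tsum_le_tsum fun j => le_iSup₂ (f := fun (ν : Measure Ω) (_ : ν ∈ Pr) => ν {ω | ((⌊a⌋₊ + j : ℕ) : ℝ) < |X ω|}) μ hμ
    exact hS.trans (le_iSup₂ (f := fun X (_ : X ∈ K) => ∑' j : ℕ,
      ⨆ μ ∈ Pr, μ {ω | ((⌊a⌋₊ + j : ℕ) : ℝ) < |X ω|}) X hX)
  have h2 : Tendsto (fun a : ℝ => F ⌊a⌋₊) atTop (𝓝 0) :=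
    hSUI.comp tendsto_nat_floor_atTop
  refine tendsto_of_tendsto_of_tendsto_of_le_of_le' tendsto_const_nhds h2 ?_ ?_
  · exact Eventually.of_forall fun a => zero_le
  · filter_upwards [eventually_ge_atTop (0 : ℝ)] with a ha using key a ha
end

section
/- Let Ω = ℕ = {0,1,2,…} with the discrete σ-algebra. For each integer n ≥ 2, let P_n be the probability measure on Ω with P_n({n}) = 1/(n·ln n) and P_n({0}) = 1 − 1/(n·ln n), and let X: Ω → ℝ be X(k) = k. Then for every integer m ≥ 2, the series Σ_{n=m}^{∞} sup_{k≥2} P_k(X > n) diverges to +∞ (indeed sup_{k≥2} P_k(X > n) = 1/((n+1)·ln(n+1)) for n ≥ 2); consequently the singleton family {X} is not S-uniformly integrable for the upper expectation 𝓔 = sup_{n≥2} E_{P_n}. -/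
open MeasureTheory Filter Topology ENNReal

lemma aux_mono {a b : ℝ} (ha : 2 ≤ a) (hab : a ≤ b) :
    1 / (b * Real.log b) ≤ 1 / (a * Real.log a) := by
  have hla : 0 < Real.log a := Real.log_pos (by linarith)
  have hpos : 0 < a * Real.log a := by positivity
  apply one_div_le_one_div_of_le hpos
  have : Real.log a ≤ Real.log b := Real.log_le_log (by linarith) hab
  nlinarith

lemma aux_pos {a : ℝ} (ha : 2 ≤ a) : 0 < 1 / (a * Real.log a) := by
  have hla : 0 < Real.log a := Real.log_pos (by linarith)
  positivity

lemma aux_le_one {a : ℝ} (ha : 2 ≤ a) : 1 / (a * Real.log a) ≤ 1 := by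
  have := aux_mono (le_refl 2) ha
  refine this.trans ?_
  have h2 : (0.6931471803 : ℝ) < Real.log 2 := Real.log_two_gt_d9
  rw [div_le_one (by nlinarith)]
  nlinarith

noncomputable def auxf (n : ℕ) : ℝ := 1 / (((max n 2 : ℕ) : ℝ) * Real.log ((max n 2 : ℕ) : ℝ))

lemma auxf_nonneg (n : ℕ) : 0 ≤ auxf n := by
  have h2 : (2:ℝ) ≤ ((max n 2 : ℕ) : ℝ) := by exact_mod_cast Nat.le_max_right n 2
  exact (aux_pos h2).le

lemma aux_not_summable : ¬ Summable auxf := by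
  have h2 : ∀ n : ℕ, (2:ℝ) ≤ ((max n 2 : ℕ) : ℝ) := by
    intro n; exact_mod_cast Nat.le_max_right n 2
  have h_nonneg : ∀ n : ℕ, 0 ≤ auxf n := auxf_nonneg
  have h_mono : ∀ ⦃m n : ℕ⦄, 0 < m → m ≤ n → auxf n ≤ auxf m := by
    intro m n _ hmn
    exact aux_mono (h2 m) (by exact_mod_cast (max_le_max hmn (le_refl 2) : max m 2 ≤ max n 2))
  intro hs
  have hcond : Summable fun k : ℕ => (2:ℝ) ^ k * auxf (2 ^ k) :=
    (summable_condensed_iff_of_nonneg h_nonneg h_mono).2 hs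
  have hshift : Summable fun k : ℕ => (2:ℝ) ^ (k+1) * auxf (2 ^ (k+1)) :=
    (summable_nat_add_iff 1).2 hcond
  have heq : ∀ k : ℕ, (2:ℝ) ^ (k+1) * auxf (2 ^ (k+1))
      = (1 / Real.log 2) * (1 / ((k:ℝ)+1)) := by
    intro k
    have hmax : max (2 ^ (k+1)) 2 = 2 ^ (k+1) := by
      apply max_eq_left
      calc 2 = 2^1 := (pow_one 2).symm
        _ ≤ 2 ^ (k+1) := Nat.pow_le_pow_right (by norm_num) (by omega)
    have hpow : (((2:ℕ) ^ (k+1) : ℕ) : ℝ) = (2:ℝ) ^ (k+1) := by push_cast; ring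
    have hl2 : (0:ℝ) < Real.log 2 := Real.log_pos (by norm_num)
    unfold auxf
    rw [hmax, hpow, Real.log_pow]
    have hp : (0:ℝ) < 2 ^ (k+1) := by positivity
    push_cast
    field_simp
  rw [funext heq] at hshift
  have hml := hshift.mul_left (Real.log 2)
  have hl2 : Real.log 2 ≠ 0 := ne_of_gt (Real.log_pos (by norm_num))
  have hsum1 : Summable fun k : ℕ => 1 / ((k:ℝ)+1) := by
    refine hml.congr fun k => ?_
    field_simp
  have : Summable fun k : ℕ => 1 / ((k:ℝ)) := by
    rw [← summable_nat_add_iff 1]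
    exact hsum1.congr fun k => by push_cast; ring
  exact Real.not_summable_one_div_natCast this

lemma aux_tsum_top {g : ℕ → ℝ} (hg : ∀ n, 0 ≤ g n) (h : ¬ Summable g) :
    (∑' n, ENNReal.ofReal (g n)) = ⊤ := by
  by_contra hne
  have heq : ∀ n, ENNReal.ofReal (g n) = ((g n).toNNReal : ℝ≥0∞) := fun n => rfl
  rw [funext heq] at hne
  have hs : Summable fun n => (g n).toNNReal := ENNReal.tsum_coe_ne_top_iff_summable.1 hne
  have : Summable fun n => ((g n).toNNReal : ℝ) := NNReal.summable_coe.2 hs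
  exact h (this.congr fun n => Real.coe_toNNReal _ (hg n))

/-- On Ω = ℕ (discrete σ-algebra), let P n (for n ≥ 2) be the probability measure
with P n {n} = 1/(n·ln n) and P n {0} = 1 − 1/(n·ln n), and let X(k) = k. Then:
(i) for every n ≥ 2, sup_{k≥2} P k (X > n) = 1/((n+1)·ln(n+1));
(ii) for every m ≥ 2, the series Σ_{n=m}^∞ sup_{k≥2} P k (X > n) diverges to +∞
(sum over integers n ≥ m, rendered by the index shift n = m + j);
(iii) consequently {X} is not S-uniformly integrable for the upper expectation
𝓔 = sup_{n≥2} E_{P n}, i.e. it is not the case that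
lim_{m→∞} Σ_{n=m}^∞ sup_{k≥2} P k (X > n) = 0. -/
theorem counterexample_not_sui (P : ℕ → Measure ℕ)
    (hprob : ∀ n : ℕ, 2 ≤ n → IsProbabilityMeasure (P n))
    (h1 : ∀ n : ℕ, 2 ≤ n → P n {n} = ENNReal.ofReal (1 / (n * Real.log n)))
    (h0 : ∀ n : ℕ, 2 ≤ n → P n {0} = ENNReal.ofReal (1 - 1 / (n * Real.log n))) :
    (∀ n : ℕ, 2 ≤ n →
      (⨆ k : ℕ, ⨆ _ : 2 ≤ k, P k {i : ℕ | n < i})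
        = ENNReal.ofReal (1 / ((n + 1) * Real.log (n + 1)))) ∧
    (∀ m : ℕ, 2 ≤ m →
      (∑' j : ℕ, ⨆ k : ℕ, ⨆ _ : 2 ≤ k, P k {i : ℕ | m + j < i}) = ⊤) ∧
    ¬ Tendsto (fun m : ℕ => ∑' j : ℕ, ⨆ k : ℕ, ⨆ _ : 2 ≤ k,
        P k {i : ℕ | m + j < i}) atTop (𝓝 0) := by
  -- value of P k on tail sets
  have hval : ∀ k : ℕ, 2 ≤ k → ∀ n : ℕ,
      P k {i : ℕ | n < i} = if n < k then ENNReal.ofReal (1 / (k * Real.log k)) else 0 := by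
    intro k hk n
    haveI := hprob k hk
    have hk2 : (2:ℝ) ≤ (k:ℝ) := by exact_mod_cast hk
    have ha_pos := aux_pos hk2
    have ha_le := aux_le_one hk2
    have hPset : P k ({0, k} : Set ℕ) = 1 := by
      have hd : Disjoint ({0} : Set ℕ) {k} := by
        simp only [Set.disjoint_singleton]
        omega
      have : ({0, k} : Set ℕ) = {0} ∪ {k} := rfl
      rw [this, measure_union hd MeasurableSet.of_discrete, h0 k hk, h1 k hk,
        ← ENNReal.ofReal_add (by linarith) ha_pos.le]
      norm_num
    have hnull : P k (({0, k} : Set ℕ)ᶜ) = 0 := by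
      rw [prob_compl_eq_zero_iff MeasurableSet.of_discrete]
      exact hPset
    by_cases h : n < k
    · rw [if_pos h]
      have hsplit := measure_inter_add_diff (μ := P k) {i : ℕ | n < i}
        (MeasurableSet.of_discrete (s := ({0, k} : Set ℕ)))
      have hinter : {i : ℕ | n < i} ∩ ({0, k} : Set ℕ) = {k} := by
        ext i
        simp only [Set.mem_inter_iff, Set.mem_setOf_eq, Set.mem_insert_iff,
          Set.mem_singleton_iff]
        omega
      have hdiff : P k ({i : ℕ | n < i} \ ({0, k} : Set ℕ)) = 0 :=
        measure_mono_null (Set.diff_subset_compl _ _) hnull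
      rw [← hsplit, hinter, hdiff, add_zero, h1 k hk]
    · rw [if_neg h]
      refine measure_mono_null ?_ hnull
      intro i hi
      simp only [Set.mem_setOf_eq] at hi
      simp only [Set.mem_compl_iff, Set.mem_insert_iff, Set.mem_singleton_iff]
      omega
  -- part (i)
  have key : ∀ n : ℕ, 2 ≤ n →
      (⨆ k : ℕ, ⨆ _ : 2 ≤ k, P k {i : ℕ | n < i})
        = ENNReal.ofReal (1 / ((n + 1) * Real.log (n + 1))) := by
    intro n hn
    apply le_antisymm
    · refine iSup₂_le fun k hk => ?_
      rw [hval k hk n]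
      split_ifs with h
      · apply ENNReal.ofReal_le_ofReal
        apply aux_mono (by push_cast; linarith [show (2:ℝ) ≤ (n:ℝ) from by exact_mod_cast hn])
        push_cast
        have : (n:ℝ) + 1 ≤ (k:ℝ) := by exact_mod_cast h
        linarith
      · exact zero_le
    · have hv := hval (n+1) (by omega) n
      rw [if_pos (by omega)] at hv
      have hcast : ((n+1 : ℕ) : ℝ) = (n:ℝ) + 1 := by push_cast; ring
      rw [hcast] at hv
      calc ENNReal.ofReal (1 / (((n:ℝ) + 1) * Real.log ((n:ℝ) + 1)))
          = P (n+1) {i : ℕ | n < i} := hv.symm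
        _ ≤ ⨆ k : ℕ, ⨆ _ : 2 ≤ k, P k {i : ℕ | n < i} :=
            le_iSup₂ (f := fun k (_ : 2 ≤ k) => P k {i : ℕ | n < i}) (n+1) (by omega)
  -- part (ii)
  have key2 : ∀ m : ℕ, 2 ≤ m →
      (∑' j : ℕ, ⨆ k : ℕ, ⨆ _ : 2 ≤ k, P k {i : ℕ | m + j < i}) = ⊤ := by
    intro m hm
    have hterm : ∀ j : ℕ, (⨆ k : ℕ, ⨆ _ : 2 ≤ k, P k {i : ℕ | m + j < i})
        = ENNReal.ofReal (auxf (m + j + 1)) := by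
      intro j
      rw [key (m + j) (by omega)]
      congr 1
      unfold auxf
      have hmx : max (m + j + 1) 2 = m + j + 1 := max_eq_left (by omega)
      rw [hmx]
      push_cast
      ring_nf
    rw [tsum_congr hterm]
    apply aux_tsum_top (fun j => auxf_nonneg _)
    intro hs
    have hco : (fun j : ℕ => auxf (m + j + 1)) = fun j : ℕ => auxf (j + (m + 1)) := by
      funext j; congr 1; omega
    rw [hco] at hs
    exact aux_not_summable ((summable_nat_add_iff (m + 1)).1 hs)
  refine ⟨key, key2, ?_⟩
  -- part (iii)
  intro h
  have h1' := h.eventually (gt_mem_nhds (show (0:ℝ≥0∞) < 1 by norm_num))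
  obtain ⟨m, hm2, hmlt⟩ := ((eventually_ge_atTop 2).and h1').exists
  rw [key2 m hm2] at hmlt
  exact absurd hmlt (by simp)
end
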